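/- Let M be a Seifert-fibered 3-manifold with fundamental group G fitting into a short exact sequence 1 → ℤ → G → S → 1, where S is virtually a surface group. Assuming that surface groups satisfy ωACC, the group G satisfies ωACC. -/

import Mathlib

/-- `RankLE H r`: the subgroup `H` is generated by at most `r` elements. -/
def RankLE {G : Type*} [Group G] (H : Subgroup G) (r : ℕ) : Prop :=
  ∃ S : Finset G, (S : Set G) ⊆ (H : Set G) ∧ Subgroup.closure (S : Set G) = H ∧ S.card ≤ r

/-- A group satisfies ωACC if every ascending chain of subgroups of uniformly
bounded rank is eventually constant. -/
def OmegaACC (G : Type*) [Group G] : Prop :=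
  ∀ r : ℕ, ∀ H : ℕ → Subgroup G, Monotone H → (∀ n, RankLE (H n) r) →
    ∃ N, ∀ n, N ≤ n → H n = H N

open Subgroup in
lemma rankLE_iff_top {G : Type*} [Group G] (H : Subgroup G) (r : ℕ) :
    RankLE H r ↔ ∃ T : Finset H, Subgroup.closure (T : Set H) = ⊤ ∧ T.card ≤ r := by
  classical
  constructor
  · rintro ⟨S, hsub, hcl, hcard⟩
    refine ⟨S.attach.image (fun x => (⟨x.1, hsub x.2⟩ : H)), ?_, ?_⟩
    · apply Subgroup.map_injective H.subtype_injective
      rw [MonoidHom.map_closure]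
      have himg : H.subtype '' ((S.attach.image (fun x => (⟨x.1, hsub x.2⟩ : H)) : Finset H) : Set H)
          = (S : Set G) := by
        ext x
        simp only [Finset.coe_image, Set.mem_image, Subgroup.coe_subtype, Finset.mem_coe]
        constructor
        · rintro ⟨y, ⟨⟨v, hv⟩, hvS, rfl⟩, rfl⟩; exact hv
        · intro hx
          exact ⟨⟨x, hsub hx⟩, ⟨⟨x, hx⟩, by simp, rfl⟩, rfl⟩
      rw [himg, hcl, ← MonoidHom.range_eq_map, Subgroup.range_subtype]
    · exact le_trans Finset.card_image_le (by simpa using hcard)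
  · rintro ⟨T, hcl, hcard⟩
    refine ⟨T.image H.subtype, ?_, ?_, le_trans Finset.card_image_le hcard⟩
    · intro x hx
      simp only [Finset.coe_image, Set.mem_image] at hx
      obtain ⟨y, _, rfl⟩ := hx
      exact y.2
    · have : (T.image H.subtype : Set G) = H.subtype '' (T : Set H) := by
        simp
      rw [this, ← MonoidHom.map_closure, hcl, ← MonoidHom.range_eq_map, Subgroup.range_subtype]

open Subgroup in
lemma rankLE_map {G G' : Type*} [Group G] [Group G'] (f : G →* G') {H : Subgroup G} {r : ℕ}
    (h : RankLE H r) : RankLE (H.map f) r := by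
  classical
  obtain ⟨T, hsub, hcl, hcard⟩ := h
  refine ⟨T.image f, ?_, ?_, le_trans Finset.card_image_le hcard⟩
  · rw [Finset.coe_image, Subgroup.coe_map]
    exact Set.image_mono hsub
  · rw [Finset.coe_image, ← MonoidHom.map_closure, hcl]

lemma nat_stabilizes {c : ℕ → ℕ} (hm : Monotone c) {d : ℕ} (hb : ∀ n, c n ≤ d) :
    ∃ N, ∀ n, N ≤ n → c n = c N := by
  have hne : (Set.range c).Nonempty := ⟨c 0, 0, rfl⟩
  have hbdd : BddAbove (Set.range c) := ⟨d, by rintro _ ⟨n, rfl⟩; exact hb n⟩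
  obtain ⟨N, hN⟩ := Nat.sSup_mem hne hbdd
  exact ⟨N, fun n hn => le_antisymm (hN ▸ le_csSup hbdd ⟨n, rfl⟩) (hm hn)⟩

lemma int_chain_stabilizes (A : ℕ → Subgroup (Multiplicative ℤ)) (hA : Monotone A) :
    ∃ N, ∀ n, N ≤ n → A n = A N := by
  let e : Subgroup (Multiplicative ℤ) →o Submodule ℤ ℤ :=
    ⟨fun K => AddSubgroup.toIntSubmodule (Subgroup.toAddSubgroup' K),
     fun a b h => AddSubgroup.toIntSubmodule.monotone (Subgroup.toAddSubgroup'.monotone h)⟩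
  obtain ⟨N, hN⟩ := monotone_stabilizes_iff_noetherian.mpr inferInstance
    ⟨fun n => e (A n), fun a b h => e.monotone (hA h)⟩
  refine ⟨N, fun n hn => ?_⟩
  have := hN n hn
  simp only [OrderHom.coe_mk, e] at this
  exact Subgroup.toAddSubgroup'.injective (AddSubgroup.toIntSubmodule.injective this.symm)

open Subgroup in
lemma omegaACC_of_mulEquiv {A B : Type*} [Group A] [Group B] (e : A ≃* B)
    (h : OmegaACC A) : OmegaACC B := by
  intro r H hm hr
  have hcomp : e.toMonoidHom.comp e.symm.toMonoidHom = MonoidHom.id B := by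
    ext x; simp
  have key : ∀ K : Subgroup B, (K.map e.symm.toMonoidHom).map e.toMonoidHom = K := by
    intro K
    rw [Subgroup.map_map, hcomp, Subgroup.map_id]
  obtain ⟨N, hN⟩ := h r (fun n => (H n).map e.symm.toMonoidHom)
    (fun a b hab => Subgroup.map_mono (hm hab)) (fun n => rankLE_map _ (hr n))
  refine ⟨N, fun n hn => ?_⟩
  have := congrArg (Subgroup.map e.toMonoidHom) (hN n hn)
  rwa [key, key] at this

open Subgroup in
lemma omegaACC_of_finiteIndexSubgroup {S : Type*} [Group S] (S₀ : Subgroup S)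
    [S₀.FiniteIndex] (h₀ : OmegaACC S₀) : OmegaACC S := by
  classical
  intro r H hm hr
  -- Step 1: each (H n ⊓ S₀).subgroupOf S₀ has rank ≤ b by Schreier
  have hrank : ∀ n, RankLE ((H n ⊓ S₀).subgroupOf S₀) (S₀.index * r) := by
    intro n
    obtain ⟨T, hcl, hcard⟩ := (rankLE_iff_top _ _).mp (hr n)
    haveI : Group.FG (H n) := Group.fg_iff'.mpr ⟨T.card, T, rfl, hcl⟩
    haveI : (S₀.subgroupOf (H n)).FiniteIndex := Subgroup.instFiniteIndex_subgroupOf S₀ (H n)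
    haveI : Group.FG (S₀.subgroupOf (H n)) := Subgroup.fg_of_index_ne_zero _
    have hSch := Subgroup.rank_le_index_mul_rank (G := H n) (H := S₀.subgroupOf (H n))
    have hidx : (S₀.subgroupOf (H n)).index ≤ S₀.index := by
      have h1 : (S₀.subgroupOf (H n)).index = S₀.relIndex (H n) := rfl
      have h2 : S₀.relIndex (H n) ≤ S₀.relIndex ⊤ :=
        Subgroup.relIndex_le_of_le_right le_top
          (by rw [Subgroup.relIndex_top_right]; exact FiniteIndex.index_ne_zero)
      rw [h1]
      rwa [Subgroup.relIndex_top_right] at h2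
    have hrk : Group.rank (H n) ≤ r := le_trans (Group.rank_le hcl) hcard
    have hbound : Group.rank (S₀.subgroupOf (H n)) ≤ S₀.index * r :=
      le_trans hSch (Nat.mul_le_mul hidx hrk)
    -- transport along mul equivs
    obtain ⟨U, hUcard, hUcl⟩ := Group.rank_spec (S₀.subgroupOf (H n))
    have e : (S₀.subgroupOf (H n)) ≃* ((H n ⊓ S₀).subgroupOf S₀) :=
      ((MulEquiv.subgroupCongr (by rw [inf_comm, Subgroup.inf_subgroupOf_right] :
          ((H n ⊓ S₀).subgroupOf (H n) : Subgroup (H n)) = S₀.subgroupOf (H n))).symm.trans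
        (Subgroup.subgroupOfEquivOfLe (inf_le_left : H n ⊓ S₀ ≤ H n))).trans
        (Subgroup.subgroupOfEquivOfLe (inf_le_right : H n ⊓ S₀ ≤ S₀)).symm
    refine (rankLE_iff_top _ _).mpr ⟨U.image e, ?_, ?_⟩
    · rw [Finset.coe_image, show (⇑e '' (U : Set _)) = ⇑e.toMonoidHom '' (U : Set _) from rfl,
        ← MonoidHom.map_closure e.toMonoidHom, hUcl,
        Subgroup.map_top_of_surjective _ e.surjective]
    · exact le_trans Finset.card_image_le (hUcard ▸ hbound)
  -- Step 2: the chain H n ⊓ S₀ stabilizes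
  obtain ⟨N₁, hN₁⟩ := h₀ (S₀.index * r) (fun n => (H n ⊓ S₀).subgroupOf S₀)
    (fun a b hab => Subgroup.comap_mono (inf_le_inf_right _ (hm hab))) hrank
  have hinf : ∀ n, N₁ ≤ n → H n ⊓ S₀ = H N₁ ⊓ S₀ := by
    intro n hn
    have := congrArg (Subgroup.map S₀.subtype) (hN₁ n hn)
    rwa [Subgroup.subgroupOf_map_subtype, Subgroup.subgroupOf_map_subtype,
      inf_assoc, inf_idem, inf_assoc, inf_idem] at this
  -- Step 3: coset counting
  set C := H N₁ ⊓ S₀ with hC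
  have hCS₀ : C ≤ S₀ := inf_le_right
  let φ : S ⧸ C → S ⧸ S₀ := Quotient.map' id (fun a b h => by
    rw [QuotientGroup.leftRel_apply] at h ⊢
    exact hCS₀ h)
  let D : ℕ → Set (S ⧸ C) := fun n => QuotientGroup.mk '' (H (N₁ + n) : Set S)
  have hinj : ∀ n, Set.InjOn φ (D n) := by
    intro n x hx y hy hxy
    obtain ⟨a, ha, rfl⟩ := hx
    obtain ⟨b, hb, rfl⟩ := hy
    have hab : ((a : S) : S ⧸ S₀) = ((b : S) : S ⧸ S₀) := hxy
    rw [QuotientGroup.eq] at hab ⊢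
    have hmem : a⁻¹ * b ∈ H (N₁ + n) := mul_mem (inv_mem ha) hb
    rw [← hinf (N₁ + n) (Nat.le_add_right _ _)]
    exact ⟨hmem, hab⟩
  have hDfin : ∀ n, (D n).Finite := fun n =>
    Set.Finite.of_finite_image (Set.toFinite _) (hinj n)
  have hDmono : Monotone D := fun a b hab =>
    Set.image_mono (SetLike.coe_subset_coe.mpr (hm (Nat.add_le_add_left hab _)))
  have hcardD : ∀ n, (D n).ncard ≤ Nat.card (S ⧸ S₀) := by
    intro n
    rw [← Set.ncard_image_of_injOn (hinj n)]
    exact le_trans (Set.ncard_le_ncard (Set.subset_univ _) Set.finite_univ)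
      (le_of_eq (Set.ncard_univ _))
  obtain ⟨N₂, hN₂⟩ := nat_stabilizes
    (fun a b hab => Set.ncard_le_ncard (hDmono hab) (hDfin b)) hcardD
  have hDeq : ∀ n, N₂ ≤ n → D n = D N₂ := fun n hn =>
    (Set.eq_of_subset_of_ncard_le (hDmono hn) (le_of_eq (hN₂ n hn)) (hDfin n)).symm
  refine ⟨N₁ + N₂, fun n hn => ?_⟩
  have hn1 : N₁ ≤ n := le_trans (Nat.le_add_right _ _) hn
  refine le_antisymm ?_ (hm hn)
  intro x hx
  have hxD : (x : S ⧸ C) ∈ D (n - N₁) := ⟨x, by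
    rw [SetLike.mem_coe, Nat.add_sub_cancel' hn1]; exact hx, rfl⟩
  rw [hDeq (n - N₁) (by omega)] at hxD
  obtain ⟨y, hy, hyx⟩ := hxD
  rw [QuotientGroup.eq] at hyx
  have hyH : y ∈ H (N₁ + N₂) := hy
  have hCle : C ≤ H (N₁ + N₂) := le_trans inf_le_left (hm (Nat.le_add_right _ _))
  have : y * (y⁻¹ * x) ∈ H (N₁ + N₂) := mul_mem hyH (hCle hyx)
  simpa using this

open scoped commutatorElement in
/-- The surface relator `[a₁,b₁]⋯[a_g,b_g]` in the free group on `2g` generators. -/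
def surfaceRelator (g : ℕ) : FreeGroup (Fin g × Fin 2) :=
  (List.ofFn (fun i : Fin g => ⁅FreeGroup.of (i, (0 : Fin 2)), FreeGroup.of (i, (1 : Fin 2))⁆)).prod

/-- The fundamental group of the closed orientable surface of genus `g`. -/
def SurfaceGroup (g : ℕ) : Type :=
  PresentedGroup ({surfaceRelator g} : Set (FreeGroup (Fin g × Fin 2)))

noncomputable instance (g : ℕ) : Group (SurfaceGroup g) := by
  unfold SurfaceGroup; infer_instance

/-- Let `M` be a Seifert-fibered 3-manifold whose fundamental group `G` fits into a
short exact sequence `1 → ℤ → G → S → 1` with `S` virtually a surface group.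
Assuming Shusterman's theorem that surface groups satisfy ωACC, `G` satisfies ωACC. -/
theorem seifert_fibered_omegaACC {G S : Type*} [Group G] [Group S]
    (i : Multiplicative ℤ →* G) (p : G →* S)
    (hi : Function.Injective i) (hp : Function.Surjective p) (hex : i.range = p.ker)
    (S₀ : Subgroup S) [S₀.FiniteIndex] (g : ℕ)
    (hiso : Nonempty (S₀ ≃* SurfaceGroup g))
    (hsurf : ∀ g' : ℕ, OmegaACC (SurfaceGroup g')) :
    OmegaACC G := by
  have hS : OmegaACC S :=
    omegaACC_of_finiteIndexSubgroup S₀ (omegaACC_of_mulEquiv hiso.some.symm (hsurf g))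
  intro r H hm hr
  obtain ⟨N₁, hN₁⟩ := hS r (fun n => (H n).map p)
    (fun a b hab => Subgroup.map_mono (hm hab)) (fun n => rankLE_map p (hr n))
  obtain ⟨N₂, hN₂⟩ := int_chain_stabilizes (fun n => (H n).comap i)
    (fun a b hab => Subgroup.comap_mono (hm hab))
  refine ⟨max N₁ N₂, fun n hn => ?_⟩
  set N := max N₁ N₂ with hNdef
  refine le_antisymm ?_ (hm hn)
  intro x hx
  have hmapeq : (H n).map p = (H N).map p := by
    rw [hN₁ n (le_trans (le_max_left _ _) hn), hN₁ N (le_max_left _ _)]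
  have hcomapeq : (H n).comap i = (H N).comap i := by
    rw [hN₂ n (le_trans (le_max_right _ _) hn), hN₂ N (le_max_right _ _)]
  have hpx : p x ∈ (H N).map p := hmapeq ▸ ⟨x, hx, rfl⟩
  obtain ⟨y, hy, hyx⟩ := hpx
  have hker : y⁻¹ * x ∈ p.ker := by
    rw [MonoidHom.mem_ker, map_mul, map_inv, hyx, inv_mul_cancel]
  have hrange : y⁻¹ * x ∈ i.range := hex ▸ hker
  have hHn : y⁻¹ * x ∈ H n := mul_mem (inv_mem (hm hn hy)) hx
  have h1 : y⁻¹ * x ∈ i.range ⊓ H n := ⟨hrange, hHn⟩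
  rw [← Subgroup.map_comap_eq, hcomapeq, Subgroup.map_comap_eq] at h1
  have : y * (y⁻¹ * x) ∈ H N := mul_mem hy h1.2
  simpa using this
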